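/- In the ring R of symmetric power series in variables x_1,...,x_r over ℚ, the ideal generated by the top d elementary symmetric functions e_{r-d+1},...,e_r equals R ∩ (x_{r-d+1},...,x_r), where the latter ideal is taken in ℚ[[x_1,...,x_r]]. -/

import Mathlib

/- STATEMENT 3: In the ring R of symmetric formal power series in x_1,…,x_r over ℚ,
the ideal generated by the top d elementary symmetric functions e_{r-d+1},…,e_r
equals R ∩ (x_{r-d+1},…,x_r), the latter ideal taken in ℚ[[x_1,…,x_r]].
Elementwise: a symmetric power series f lies in the ideal (x_{r-d+1},…,x_r) of
ℚ[[x_1,…,x_r]] iff it is a combination f = Σ_{k=r-d+1}^{r} e_k·g_k with the g_k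
symmetric power series. (Variables are indexed by Fin r, so x_{r-d+1},…,x_r
correspond to the indices i with r - d ≤ i.) -/

/-- A formal power series is symmetric if its coefficients are invariant under
permutations of the variables. -/
def IsSymmPS (r : ℕ) (f : MvPowerSeries (Fin r) ℚ) : Prop :=
  ∀ σ : Equiv.Perm (Fin r), ∀ d : Fin r →₀ ℕ,
    MvPowerSeries.coeff (Finsupp.mapDomain σ d) f = MvPowerSeries.coeff d f

namespace Stmt3Proof

open MvPolynomial Finset

variable {r d : ℕ}

lemma degree_eq_sum_univ (m : Fin r →₀ ℕ) : m.degree = ∑ i, m i :=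
  Finset.sum_subset (Finset.subset_univ _) fun i _ h => Finsupp.notMem_support_iff.mp h

lemma degree_mapDomain (σe : Equiv.Perm (Fin r)) (m : Fin r →₀ ℕ) :
    (Finsupp.mapDomain σe m).degree = m.degree := by
  rw [degree_eq_sum_univ, degree_eq_sum_univ]
  simp only [Finsupp.mapDomain_equiv_apply]
  exact Fintype.sum_equiv σe.symm _ _ fun i => rfl

lemma degree_add (a b : Fin r →₀ ℕ) : (a + b).degree = a.degree + b.degree := by
  simp [degree_eq_sum_univ, Finsupp.add_apply, Finset.sum_add_distrib]

lemma degree_of_coeff_esymm {k : ℕ} {a : Fin r →₀ ℕ}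
    (h : MvPolynomial.coeff a (esymm (Fin r) ℚ k) ≠ 0) : a.degree = k := by
  classical
  rw [esymm_eq_sum_monomial, coeff_sum] at h
  obtain ⟨t, ht, hne⟩ := Finset.exists_ne_zero_of_sum_ne_zero h
  rw [coeff_monomial] at hne
  have hat : (∑ i ∈ t, Finsupp.single i (1 : ℕ)) = a := by
    by_contra hc; exact hne (if_neg hc)
  rw [Finset.mem_powersetCard] at ht
  subst hat
  rw [degree_eq_sum_univ]
  simp only [Finsupp.finset_sum_apply, Finsupp.single_apply]
  rw [Finset.sum_comm]
  simp only [Finset.sum_ite_eq, Finset.mem_univ, if_true]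
  simp [ht.2]

/-- The set of exponents of total degree `n`. -/
noncomputable def Dset (r n : ℕ) : Finset (Fin r →₀ ℕ) :=
  (Finset.Iic (Finsupp.equivFunOnFinite.symm fun _ => n)).filter fun m => m.degree = n

lemma mem_Dset {n : ℕ} {m : Fin r →₀ ℕ} : m ∈ Dset r n ↔ m.degree = n := by
  simp only [Dset, Finset.mem_filter, Finset.mem_Iic, and_iff_right_iff_imp]
  intro h
  rw [Finsupp.le_def]
  intro i
  have := Finsupp.le_degree i m
  simp only [Finsupp.equivFunOnFinite_symm_apply_apply]
  omega

/-- The homogeneous component of degree `n` of a power series, as a polynomial. -/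
noncomputable def hcPS (r n : ℕ) (f : MvPowerSeries (Fin r) ℚ) : MvPolynomial (Fin r) ℚ :=
  ∑ m ∈ Dset r n, monomial m (MvPowerSeries.coeff m f)

lemma coeff_hcPS (n : ℕ) (f : MvPowerSeries (Fin r) ℚ) (m : Fin r →₀ ℕ) :
    MvPolynomial.coeff m (hcPS r n f) =
      if m.degree = n then MvPowerSeries.coeff m f else 0 := by
  classical
  rw [hcPS, coeff_sum]
  simp only [coeff_monomial]
  rw [Finset.sum_ite_eq' (Dset r n) m (fun m' => MvPowerSeries.coeff m' f)]
  congr 1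
  · simp [mem_Dset]

lemma coeff_rename_perm (σe : Equiv.Perm (Fin r)) (p : MvPolynomial (Fin r) ℚ)
    (m : Fin r →₀ ℕ) :
    MvPolynomial.coeff m (rename σe p) =
      MvPolynomial.coeff (Finsupp.mapDomain σe.symm m) p := by
  have hm : m = Finsupp.mapDomain σe (Finsupp.mapDomain σe.symm m) := by
    rw [← Finsupp.mapDomain_comp, Equiv.self_comp_symm, Finsupp.mapDomain_id]
  conv_lhs => rw [hm]
  rw [coeff_rename_mapDomain _ σe.injective]

lemma hcPS_isSymmetric {f : MvPowerSeries (Fin r) ℚ} (hf : IsSymmPS r f) (n : ℕ) :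
    (hcPS r n f).IsSymmetric := by
  intro σe
  apply MvPolynomial.ext
  intro m
  rw [coeff_rename_perm, coeff_hcPS, coeff_hcPS, degree_mapDomain, hf σe.symm m]

variable (r d) in
/-- The substitution killing the last `d` variables. -/
noncomputable def vmap : Fin r → MvPolynomial (Fin (r - d)) ℚ :=
  fun i => if h : (i : ℕ) < r - d then X ⟨i, h⟩ else 0

lemma aeval_vmap_hcPS {f : MvPowerSeries (Fin r) ℚ}
    (hlow : ∀ m : Fin r →₀ ℕ, (∀ i : Fin r, r - d ≤ (i : ℕ) → m i = 0) →
      MvPowerSeries.coeff m f = 0) (n : ℕ) :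
    aeval (vmap r d) (hcPS r n f) = 0 := by
  rw [hcPS, map_sum]
  refine Finset.sum_eq_zero fun m _ => ?_
  rw [aeval_monomial]
  by_cases hc : ∀ i : Fin r, r - d ≤ (i : ℕ) → m i = 0
  · rw [hlow m hc]; simp
  · push_neg at hc
    obtain ⟨i, hi, hmi⟩ := hc
    have hv : (vmap r d i) ^ (m i) = 0 := by
      rw [vmap, dif_neg (by omega)]
      exact zero_pow hmi
    rw [Finsupp.prod, Finset.prod_eq_zero (Finsupp.mem_support_iff.2 hmi) hv, mul_zero]

lemma esymm_eq_zero_of_card_lt {n k : ℕ} (h : n < k) : esymm (Fin n) ℚ k = 0 := by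
  rw [esymm, Finset.powersetCard_eq_empty.2 (by simpa using h), Finset.sum_empty]

lemma aeval_vmap_esymm (k : ℕ) :
    aeval (vmap r d) (esymm (Fin r) ℚ k) = esymm (Fin (r - d)) ℚ k := by
  classical
  rw [esymm, map_sum, esymm]
  have hside : ∀ T ∈ powersetCard k (univ : Finset (Fin r)),
      (aeval (vmap r d)) (∏ i ∈ T, (X i : MvPolynomial (Fin r) ℚ)) ≠ 0 →
        ∀ i ∈ T, (i : ℕ) < r - d := by
    intro T _ hne i hiT
    by_contra hhigh
    apply hne
    rw [map_prod]
    refine Finset.prod_eq_zero hiT ?_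
    rw [aeval_X, vmap, dif_neg hhigh]
  rw [← Finset.sum_filter_of_ne hside]
  have hkey : ∀ T : Finset (Fin r), (∀ i ∈ T, (i : ℕ) < r - d) →
      Finset.image (Fin.castLE (Nat.sub_le r d))
        (T.preimage (Fin.castLE (Nat.sub_le r d))
          ((Fin.castLE_injective _).injOn)) = T := by
    intro T hT
    rw [Finset.image_preimage]
    refine Finset.filter_true_of_mem fun x hx => ?_
    exact ⟨⟨x, hT x hx⟩, by ext; simp⟩
  refine Finset.sum_bij
    (fun T _ => T.preimage (Fin.castLE (Nat.sub_le r d)) ((Fin.castLE_injective _).injOn))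
    ?_ ?_ ?_ ?_
  · intro T hT
    rw [Finset.mem_filter, mem_powersetCard] at hT
    rw [mem_powersetCard]
    refine ⟨Finset.subset_univ _, ?_⟩
    have hc := congrArg Finset.card (hkey T hT.2)
    rw [Finset.card_image_of_injective _ (Fin.castLE_injective _)] at hc
    rw [hc]
    exact hT.1.2
  · intro T₁ h₁ T₂ h₂ heq
    rw [Finset.mem_filter] at h₁ h₂
    have heq' : T₁.preimage (Fin.castLE (Nat.sub_le r d)) ((Fin.castLE_injective _).injOn)
        = T₂.preimage (Fin.castLE (Nat.sub_le r d)) ((Fin.castLE_injective _).injOn) := heq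
    rw [← hkey T₁ h₁.2, ← hkey T₂ h₂.2, heq']
  · intro S hS
    refine ⟨S.map (Fin.castLEEmb (Nat.sub_le r d)), ?_, ?_⟩
    · rw [Finset.mem_filter, mem_powersetCard]
      refine ⟨⟨Finset.subset_univ _, ?_⟩, ?_⟩
      · rw [Finset.card_map]
        rw [mem_powersetCard] at hS
        exact hS.2
      · intro i hi
        rw [Finset.mem_map] at hi
        obtain ⟨y, _, rfl⟩ := hi
        simpa using y.isLt
    · ext x
      rw [Finset.mem_preimage]
      exact Finset.mem_map' _
  · intro T hT
    rw [Finset.mem_filter] at hT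
    rw [map_prod]
    conv_lhs => rw [← hkey T hT.2]
    rw [Finset.prod_image fun a _ b _ h => Fin.castLE_injective _ h]
    refine Finset.prod_congr rfl fun x _ => ?_
    rw [aeval_X, vmap, dif_pos (by simpa using x.isLt)]
    exact congrArg X (by ext; simp)

lemma aeval_u_isSymmetric (Q : MvPolynomial (Fin r) ℚ) :
    ((aeval fun k : Fin r => esymm (Fin r) ℚ ((k : ℕ) + 1)) Q).IsSymmetric := by
  rw [← esymmAlgHom_apply]
  exact (mem_symmetricSubalgebra _).mp (esymmAlgHom (Fin r) ℚ r Q).2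

lemma polyLem (hd : d ≤ r) (p : MvPolynomial (Fin r) ℚ) (hp : p.IsSymmetric)
    (h0 : aeval (vmap r d) p = 0) :
    ∃ q : ℕ → MvPolynomial (Fin r) ℚ, (∀ k, (q k).IsSymmetric) ∧
      p = ∑ k ∈ Finset.Icc (r - d + 1) r, esymm (Fin r) ℚ k * q k := by
  classical
  obtain ⟨P, hP⟩ := (esymmAlgHom_fin_bijective ℚ r).2 ⟨p, hp⟩
  have hPval : (aeval fun k : Fin r => esymm (Fin r) ℚ ((k : ℕ) + 1)) P = p := by
    rw [← esymmAlgHom_apply, hP]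
  have hcomp : ((aeval (vmap r d)).comp
        (aeval fun k : Fin r => esymm (Fin r) ℚ ((k : ℕ) + 1)) :
        MvPolynomial (Fin r) ℚ →ₐ[ℚ] MvPolynomial (Fin (r - d)) ℚ)
      = ((aeval fun k : Fin (r - d) => esymm (Fin (r - d)) ℚ ((k : ℕ) + 1)).comp
        (aeval (vmap r d))) := by
    apply algHom_ext
    intro k
    simp only [AlgHom.comp_apply, aeval_X]
    rw [aeval_vmap_esymm, vmap]
    split_ifs with h
    · rw [aeval_X]
    · rw [map_zero]
      exact esymm_eq_zero_of_card_lt (by omega)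
  have hψ : aeval (vmap r d) P = 0 := by
    have h1 := AlgHom.congr_fun hcomp P
    simp only [AlgHom.comp_apply] at h1
    rw [hPval, h0] at h1
    have hinj := esymmAlgHom_fin_injective ℚ (n := r - d) (m := r - d) le_rfl
    apply hinj
    rw [map_zero]
    exact Subtype.ext (by rw [esymmAlgHom_apply, ← h1, ZeroMemClass.coe_zero])
  set I : Ideal (MvPolynomial (Fin r) ℚ) :=
    Ideal.span {g : MvPolynomial (Fin r) ℚ | ∃ k : Fin r, r - d ≤ (k : ℕ) ∧ g = X k} with hI
  have hspanSub : ∀ Q : MvPolynomial (Fin r) ℚ,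
      Q - (aeval fun k : Fin r =>
        if (k : ℕ) < r - d then (X k : MvPolynomial (Fin r) ℚ) else 0) Q ∈ I := by
    intro Q
    induction Q using MvPolynomial.induction_on with
    | C a => rw [aeval_C, algebraMap_eq, sub_self]; exact Ideal.zero_mem _
    | add p1 p2 h1 h2 =>
      rw [map_add]
      have h3 := Ideal.add_mem _ h1 h2
      convert h3 using 1
      ring
    | mul_X p1 k h1 =>
      rw [map_mul, aeval_X]
      by_cases hk : (k : ℕ) < r - d
      · rw [if_pos hk]
        have he : p1 * X k - (aeval fun k : Fin r =>
            if (k : ℕ) < r - d then (X k : MvPolynomial (Fin r) ℚ) else 0) p1 * X k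
            = (p1 - (aeval fun k : Fin r =>
            if (k : ℕ) < r - d then (X k : MvPolynomial (Fin r) ℚ) else 0) p1) * X k := by
          ring
        rw [he]
        exact Ideal.mul_mem_right _ _ h1
      · rw [if_neg hk, mul_zero, sub_zero]
        exact Ideal.mul_mem_left _ _ (Ideal.subset_span ⟨k, le_of_not_gt hk, rfl⟩)
  have hws : ((aeval fun k : Fin r =>
        if (k : ℕ) < r - d then (X k : MvPolynomial (Fin r) ℚ) else 0) :
        MvPolynomial (Fin r) ℚ →ₐ[ℚ] MvPolynomial (Fin r) ℚ)
      = (rename (Fin.castLE (Nat.sub_le r d))).comp (aeval (vmap r d)) := by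
    apply algHom_ext
    intro k
    simp only [AlgHom.comp_apply, aeval_X, vmap]
    split_ifs with h
    · rw [rename_X]
      exact congrArg X (by ext; simp)
    · rw [map_zero]
  have hPspan : P ∈ I := by
    have h2 := hspanSub P
    have h3 : (aeval fun k : Fin r =>
        if (k : ℕ) < r - d then (X k : MvPolynomial (Fin r) ℚ) else 0) P = 0 := by
      have := AlgHom.congr_fun hws P
      simp only [AlgHom.comp_apply] at this
      rw [this, hψ, map_zero]
    rwa [h3, sub_zero] at h2
  have hsetimg : {g : MvPolynomial (Fin r) ℚ | ∃ k : Fin r, r - d ≤ (k : ℕ) ∧ g = X k}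
      = (((univ.filter fun k : Fin r => r - d ≤ (k : ℕ)).image
          (X : Fin r → MvPolynomial (Fin r) ℚ) : Finset (MvPolynomial (Fin r) ℚ)) :
          Set (MvPolynomial (Fin r) ℚ)) := by
    ext g
    simp only [Set.mem_setOf_eq, Finset.coe_image, Set.mem_image, Finset.mem_coe,
      Finset.mem_filter, Finset.mem_univ, true_and]
    constructor
    · rintro ⟨k, hk, rfl⟩; exact ⟨k, hk, rfl⟩
    · rintro ⟨k, hk, rfl⟩; exact ⟨k, hk, rfl⟩
  rw [hI, hsetimg] at hPspan
  obtain ⟨c, -, hc⟩ := Submodule.mem_span_finset.1 hPspan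
  refine ⟨fun n => if h : r - d + 1 ≤ n ∧ n ≤ r then
      (aeval fun k : Fin r => esymm (Fin r) ℚ ((k : ℕ) + 1))
        (c (X ⟨n - 1, by omega⟩)) else 0, ?_, ?_⟩
  · intro n
    dsimp only
    split_ifs
    · exact aeval_u_isSymmetric _
    · intro e; simp
  · rw [← hPval, ← hc, map_sum]
    rw [Finset.sum_image fun a _ b _ h => X_injective h]
    refine Finset.sum_bij (fun k _ => (k : ℕ) + 1) ?_ ?_ ?_ ?_
    · intro k hk
      rw [Finset.mem_filter] at hk
      show (k : ℕ) + 1 ∈ Finset.Icc (r - d + 1) r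
      rw [Finset.mem_Icc]
      have := k.isLt
      omega
    · intro k₁ _ k₂ _ heq
      have h' : (k₁ : ℕ) + 1 = (k₂ : ℕ) + 1 := heq
      ext
      omega
    · intro n hn
      rw [Finset.mem_Icc] at hn
      refine ⟨⟨n - 1, by omega⟩, ?_, by show n - 1 + 1 = n; omega⟩
      rw [Finset.mem_filter]
      refine ⟨Finset.mem_univ _, ?_⟩
      show r - d ≤ n - 1
      omega
    · intro k hk
      rw [Finset.mem_filter] at hk
      dsimp only
      rw [smul_eq_mul, map_mul, aeval_X]
      have hq : (r - d + 1 ≤ (k : ℕ) + 1 ∧ (k : ℕ) + 1 ≤ r) := by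
        have := k.isLt
        omega
      rw [dif_pos hq]
      have hkk : (⟨(k : ℕ) + 1 - 1, by omega⟩ : Fin r) = k := by
        ext; simp
      rw [hkk]
      ring

lemma low_coeff_zero {f : MvPowerSeries (Fin r) ℚ}
    (h : f ∈ Ideal.span {g : MvPowerSeries (Fin r) ℚ |
        ∃ i : Fin r, r - d ≤ (i : ℕ) ∧ g = MvPowerSeries.X i})
    (m : Fin r →₀ ℕ) (hm : ∀ i : Fin r, r - d ≤ (i : ℕ) → m i = 0) :
    MvPowerSeries.coeff m f = 0 := by
  classical
  refine Submodule.span_induction (p := fun x _ => ∀ m : Fin r →₀ ℕ,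
      (∀ i : Fin r, r - d ≤ (i : ℕ) → m i = 0) → MvPowerSeries.coeff m x = 0)
    ?_ ?_ ?_ ?_ h m hm
  · rintro x ⟨i, hi, rfl⟩ m hm
    rw [MvPowerSeries.coeff_X, if_neg]
    intro he
    have h1 := hm i hi
    rw [he] at h1
    simp at h1
  · intro m _; simp
  · intro x y _ _ ihx ihy m hm
    rw [map_add, ihx m hm, ihy m hm, add_zero]
  · intro a x _ ih m hm
    rw [smul_eq_mul, MvPowerSeries.coeff_mul]
    refine Finset.sum_eq_zero fun p hp => ?_
    rw [Finset.HasAntidiagonal.mem_antidiagonal] at hp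
    rw [ih p.2 ?_, mul_zero]
    intro i hi
    have h1 : p.1 i + p.2 i = m i := by rw [← Finsupp.add_apply, hp]
    have h2 := hm i hi
    omega

lemma esymm_mem_span (hd : d ≤ r) {k : ℕ} (hk1 : r - d + 1 ≤ k) (hk2 : k ≤ r) :
    ((esymm (Fin r) ℚ k : MvPolynomial (Fin r) ℚ) : MvPowerSeries (Fin r) ℚ) ∈
      Ideal.span {g : MvPowerSeries (Fin r) ℚ |
        ∃ i : Fin r, r - d ≤ (i : ℕ) ∧ g = MvPowerSeries.X i} := by
  classical
  have hcast : ((esymm (Fin r) ℚ k : MvPolynomial (Fin r) ℚ) : MvPowerSeries (Fin r) ℚ)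
      = ∑ t ∈ powersetCard k (univ : Finset (Fin r)),
          ∏ i ∈ t, (MvPowerSeries.X i : MvPowerSeries (Fin r) ℚ) := by
    rw [show ((esymm (Fin r) ℚ k : MvPolynomial (Fin r) ℚ) : MvPowerSeries (Fin r) ℚ)
        = MvPolynomial.coeToMvPowerSeries.ringHom (esymm (Fin r) ℚ k) from rfl]
    rw [esymm, map_sum]
    refine Finset.sum_congr rfl fun t _ => ?_
    rw [map_prod]
    refine Finset.prod_congr rfl fun i _ => ?_
    exact MvPolynomial.coe_X i
  rw [hcast]
  refine Ideal.sum_mem _ fun t ht => ?_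
  rw [mem_powersetCard] at ht
  have hex : ∃ i ∈ t, r - d ≤ (i : ℕ) := by
    by_contra hno
    push_neg at hno
    have himg : (univ.filter fun i : Fin r => (i : ℕ) < r - d)
        = Finset.image (Fin.castLE (Nat.sub_le r d)) univ := by
      ext x
      simp only [Finset.mem_filter, Finset.mem_univ, true_and, Finset.mem_image]
      constructor
      · intro hx
        exact ⟨⟨x, hx⟩, by ext; simp⟩
      · rintro ⟨y, -, rfl⟩
        simpa using y.isLt
    have hsub : t ⊆ univ.filter fun i : Fin r => (i : ℕ) < r - d :=
      fun x hx => Finset.mem_filter.2 ⟨Finset.mem_univ _, hno x hx⟩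
    have hcard := Finset.card_le_card hsub
    rw [himg, Finset.card_image_of_injective _ (Fin.castLE_injective _),
      Finset.card_univ, Fintype.card_fin] at hcard
    omega
  obtain ⟨i0, hi0t, hi0⟩ := hex
  obtain ⟨c, hc⟩ := Finset.dvd_prod_of_mem
    (fun i => (MvPowerSeries.X i : MvPowerSeries (Fin r) ℚ)) hi0t
  rw [hc]
  exact Ideal.mul_mem_right _ _ (Ideal.subset_span ⟨i0, hi0, rfl⟩)

end Stmt3Proof

open Stmt3Proof MvPolynomial in
theorem stmt3 (r d : ℕ) (hd : d ≤ r) (f : MvPowerSeries (Fin r) ℚ) (hf : IsSymmPS r f) :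
    f ∈ Ideal.span {g : MvPowerSeries (Fin r) ℚ |
        ∃ i : Fin r, r - d ≤ (i : ℕ) ∧ g = MvPowerSeries.X i}
    ↔ ∃ g : ℕ → MvPowerSeries (Fin r) ℚ, (∀ k, IsSymmPS r (g k)) ∧
        f = ∑ k ∈ Finset.Icc (r - d + 1) r,
          (↑(MvPolynomial.esymm (Fin r) ℚ k) : MvPowerSeries (Fin r) ℚ) * g k := by
  classical
  constructor
  · intro h
    have hlow : ∀ m : Fin r →₀ ℕ, (∀ i : Fin r, r - d ≤ (i : ℕ) → m i = 0) →
        MvPowerSeries.coeff m f = 0 := fun m hm => low_coeff_zero (d := d) h m hm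
    have hmain : ∀ n : ℕ, ∃ q : ℕ → MvPolynomial (Fin r) ℚ,
        (∀ k, (q k).IsSymmetric) ∧
        hcPS r n f = ∑ k ∈ Finset.Icc (r - d + 1) r, esymm (Fin r) ℚ k * q k :=
      fun n => polyLem hd _ (hcPS_isSymmetric hf n) (aeval_vmap_hcPS hlow n)
    choose q hqs hqe using hmain
    refine ⟨fun k => (fun m => MvPolynomial.coeff m (q (m.degree + k) k) :
      MvPowerSeries (Fin r) ℚ), ?_, ?_⟩
    · intro k σe m
      show MvPolynomial.coeff _ (q ((Finsupp.mapDomain σe m).degree + k) k) =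
        MvPolynomial.coeff m (q (m.degree + k) k)
      rw [degree_mapDomain]
      conv_lhs => rw [← hqs (m.degree + k) k σe]
      rw [coeff_rename_mapDomain _ σe.injective]
    · apply MvPowerSeries.ext
      intro m
      rw [map_sum]
      have hn : MvPowerSeries.coeff m f = MvPolynomial.coeff m (hcPS r m.degree f) := by
        rw [coeff_hcPS, if_pos rfl]
      rw [hn, hqe m.degree, MvPolynomial.coeff_sum]
      refine Finset.sum_congr rfl fun k _ => ?_
      rw [MvPolynomial.coeff_mul]
      erw [MvPowerSeries.coeff_mul]
      refine Finset.sum_congr rfl fun ab hab => ?_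
      rw [Finset.HasAntidiagonal.mem_antidiagonal] at hab
      rw [MvPolynomial.coeff_coe]
      by_cases h0 : MvPolynomial.coeff ab.1 (esymm (Fin r) ℚ k) = 0
      · rw [h0, zero_mul, zero_mul]
      · have hda := degree_of_coeff_esymm h0
        have hdb : ab.2.degree + k = m.degree := by
          rw [← hab, degree_add, hda]; ring
        congr 1
        show MvPolynomial.coeff ab.2 (q m.degree k) =
          MvPolynomial.coeff ab.2 (q (ab.2.degree + k) k)
        rw [hdb]
  · rintro ⟨g, _, rfl⟩
    refine Ideal.sum_mem _ fun k hk => ?_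
    rw [Finset.mem_Icc] at hk
    exact Ideal.mul_mem_right _ _ (esymm_mem_span (d := d) hd hk.1 hk.2)
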